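/- Let S = {r1,…,rn} be an SREU problem over a finite signature Σ with variables x1,…,xm, where ri = (Ei ⊩ e*i). Let a1,…,am and ⊥ be fresh constants and f a fresh unary function symbol, let σf be the substitution xj ↦ f(aj), and set ψi := ((⋀_{e∈Ei} e·σf) ∧ (⋀_{k≠j} ak ≠ aj)) → e*i·σf, and ΦS := ⋀i ψi. For ground terms u1,…,um ∈ T(Σ) let w_u(x) := ITE(x = a1, u1, ITE(x = a2, u2, …, ITE(x = am, um, ⊥)…)), where in any structure ITE(s = t, r, r′) denotes the element equal to the value of r if s = t holds and to the value of r′ otherwise. Then: S has a solution if and only if there exist ground terms u1,…,um ∈ T(Σ) such that ΦS{w_u/f} holds in every nonempty (Σ ∪ {a1,…,am,⊥})-structure. -/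

import Mathlib

namespace SyGuS

/-- Terms over a ranked alphabet: symbols `F`, each of arity `ar f`. -/
inductive Tm (F : Type) (ar : F → ℕ) : Type
  | app (f : F) (args : Fin (ar f) → Tm F ar) : Tm F ar

/-- Arity function on `F ⊕ Fin k`: the `k` extra symbols are constants
(the variables `x₁,…,x_k`, treated as constants). -/
abbrev varAr {F : Type} (ar : F → ℕ) (k : ℕ) : F ⊕ Fin k → ℕ := Sum.elim ar fun _ => 0

/-- Arity function on `F ⊕ Unit`: the extra symbol is the function symbol `f` of arity `k`. -/
abbrev fAr {F : Type} (ar : F → ℕ) (k : ℕ) : F ⊕ Unit → ℕ := Sum.elim ar fun _ => k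

/-- A (nonempty) first-order structure for the ranked alphabet `(F, ar)`. -/
structure Str (F : Type) (ar : F → ℕ) : Type 1 where
  D : Type
  [nonemptyD : Nonempty D]
  interp : (f : F) → (Fin (ar f) → D) → D

attribute [instance] Str.nonemptyD

/-- Evaluation of a ground term in a structure. -/
def Tm.eval {F : Type} {ar : F → ℕ} (M : Str F ar) : Tm F ar → M.D
  | .app f args => M.interp f fun i => (args i).eval M

/-- First-order substitution: replace the variables `x₁,…,x_k` by terms. -/
def Tm.instVars {F : Type} {ar : F → ℕ} {k : ℕ} (σ : Fin k → Tm F ar) :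
    Tm (F ⊕ Fin k) (varAr ar k) → Tm F ar
  | .app (Sum.inl g) args => .app g fun i => Tm.instVars σ (args i)
  | .app (Sum.inr i) _ => σ i

/-- Second-order substitution `·{w/f}`: replace every application `f(s₁,…,s_k)` of the
distinguished symbol `f` by `w{s₁/x₁,…,s_k/x_k}`. -/
def Tm.soSubst {F : Type} {ar : F → ℕ} {k : ℕ} (w : Tm (F ⊕ Fin k) (varAr ar k)) :
    Tm (F ⊕ Unit) (fAr ar k) → Tm F ar
  | .app (Sum.inl g) args => .app g fun i => Tm.soSubst w (args i)
  | .app (Sum.inr _) args => Tm.instVars (fun i => Tm.soSubst w (args i)) w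

/-- Renaming of symbols along an arity-preserving map. -/
def Tm.rename {F G : Type} {arF : F → ℕ} {arG : G → ℕ} (h : F → G)
    (hh : ∀ f, arG (h f) = arF f) : Tm F arF → Tm G arG
  | .app f args => .app (h f) fun i => (args (Fin.cast (hh f) i)).rename h hh

/-- Equational consequence: `E ⊢ s = t` iff every structure satisfying all
equations of `E` also satisfies `s = t`. -/
def EqCons {F : Type} {ar : F → ℕ} (E : Set (Tm F ar × Tm F ar)) (s t : Tm F ar) : Prop :=
  ∀ M : Str F ar, (∀ e ∈ E, Tm.eval M e.1 = Tm.eval M e.2) → s.eval M = t.eval M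

mutual
/-- Terms (possibly containing if-then-else) over a ranked alphabet. -/
inductive ITm (F : Type) (ar : F → ℕ) : Type
  | app (f : F) (args : Fin (ar f) → ITm F ar) : ITm F ar
  | ite (c : IFm F ar) (t e : ITm F ar) : ITm F ar

/-- Quantifier-free formulas over terms with if-then-else. -/
inductive IFm (F : Type) (ar : F → ℕ) : Type
  | eq (s t : ITm F ar) : IFm F ar
  | not (φ : IFm F ar) : IFm F ar
  | and (φ ψ : IFm F ar) : IFm F ar
  | or (φ ψ : IFm F ar) : IFm F ar
end

open Classical in
mutual
/-- Evaluation of a term in a structure; `ITE(c,t,e)` evaluates to the value of `t`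
if `c` holds and to the value of `e` otherwise. -/
noncomputable def ITm.eval {F : Type} {ar : F → ℕ} (M : Str F ar) : ITm F ar → M.D
  | .app f args => M.interp f fun i => ITm.eval M (args i)
  | .ite c t e => if IFm.holds M c then ITm.eval M t else ITm.eval M e

/-- Truth of a formula in a structure. -/
noncomputable def IFm.holds {F : Type} {ar : F → ℕ} (M : Str F ar) : IFm F ar → Prop
  | .eq s t => ITm.eval M s = ITm.eval M t
  | .not φ => ¬ IFm.holds M φ
  | .and φ ψ => IFm.holds M φ ∧ IFm.holds M ψ
  | .or φ ψ => IFm.holds M φ ∨ IFm.holds M ψ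
end

/-- Validity: truth in every nonempty structure. -/
def IFm.valid {F : Type} {ar : F → ℕ} (φ : IFm F ar) : Prop := ∀ M : Str F ar, IFm.holds M φ

mutual
/-- First-order substitution of terms for the variables `x₁,…,x_k` in a term. -/
def ITm.instVars {F : Type} {ar : F → ℕ} {k : ℕ} (σ : Fin k → ITm F ar) :
    ITm (F ⊕ Fin k) (varAr ar k) → ITm F ar
  | .app (Sum.inl g) args => .app g fun i => ITm.instVars σ (args i)
  | .app (Sum.inr i) _ => σ i
  | .ite c t e => .ite (IFm.instVars σ c) (ITm.instVars σ t) (ITm.instVars σ e)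

/-- First-order substitution in a formula. -/
def IFm.instVars {F : Type} {ar : F → ℕ} {k : ℕ} (σ : Fin k → ITm F ar) :
    IFm (F ⊕ Fin k) (varAr ar k) → IFm F ar
  | .eq s t => .eq (ITm.instVars σ s) (ITm.instVars σ t)
  | .not φ => .not (IFm.instVars σ φ)
  | .and φ ψ => .and (IFm.instVars σ φ) (IFm.instVars σ ψ)
  | .or φ ψ => .or (IFm.instVars σ φ) (IFm.instVars σ ψ)
end

mutual
/-- Second-order substitution `·{w/f}` on terms: every application `f(s₁,…,s_k)` of the
distinguished `k`-ary symbol `f` is replaced by `w{s₁/x₁,…,s_k/x_k}`. -/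
def ITm.soSubst {F : Type} {ar : F → ℕ} {k : ℕ} (w : ITm (F ⊕ Fin k) (varAr ar k)) :
    ITm (F ⊕ Unit) (fAr ar k) → ITm F ar
  | .app (Sum.inl g) args => .app g fun i => ITm.soSubst w (args i)
  | .app (Sum.inr _) args => ITm.instVars (fun i => ITm.soSubst w (args i)) w
  | .ite c t e => .ite (IFm.soSubst w c) (ITm.soSubst w t) (ITm.soSubst w e)

/-- Second-order substitution `·{w/f}` on formulas. -/
def IFm.soSubst {F : Type} {ar : F → ℕ} {k : ℕ} (w : ITm (F ⊕ Fin k) (varAr ar k)) :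
    IFm (F ⊕ Unit) (fAr ar k) → IFm F ar
  | .eq s t => .eq (ITm.soSubst w s) (ITm.soSubst w t)
  | .not φ => .not (IFm.soSubst w φ)
  | .and φ ψ => .and (IFm.soSubst w φ) (IFm.soSubst w ψ)
  | .or φ ψ => .or (IFm.soSubst w φ) (IFm.soSubst w ψ)
end

/-- Finite conjunction (empty conjunction is a tautology `⊤`, encoded via a given term). -/
def IFm.bigAnd {F : Type} {ar : F → ℕ} (top : IFm F ar) (l : List (IFm F ar)) : IFm F ar :=
  l.foldr IFm.and top

/-! ### Statement 0: reduction of SREU to SyGuS-EUF (Lemma `sreutoeuf`)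

The SREU problem `S` is a finite list of rigid equations `(Eᵢ, e*ᵢ)` over the finite
signature `Σ = (F, ar)` with variables `x₁,…,x_m`.  We extend the signature by fresh
constants `a₁,…,a_m` and `⊥` (the summand `Fin m ⊕ Unit`), and by a fresh unary function
symbol `f` (the summand `Unit`). -/

/-- The extended signature `Σ ∪ {a₁,…,a_m, ⊥}`. -/
abbrev SigA (F : Type) (m : ℕ) : Type := F ⊕ (Fin m ⊕ Unit)

/-- Arities for the extended signature: the fresh symbols are constants. -/
abbrev arA {F : Type} (ar : F → ℕ) (m : ℕ) : SigA F m → ℕ := Sum.elim ar fun _ => 0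

section Statement0

variable {F : Type} (ar : F → ℕ) (m : ℕ)

/-- The constant `a_j`, as a term over `Σ ∪ {a₁,…,a_m,⊥} ∪ {f}`. -/
def aConst (j : Fin m) : ITm (SigA F m ⊕ Unit) (fAr (arA ar m) 1) :=
  .app (Sum.inl (Sum.inr (Sum.inl j))) fun i => i.elim0

/-- The constant `⊥`, as a term over `Σ ∪ {a₁,…,a_m,⊥} ∪ {f}`. -/
def botConst : ITm (SigA F m ⊕ Unit) (fAr (arA ar m) 1) :=
  .app (Sum.inl (Sum.inr (Sum.inr ()))) fun i => i.elim0

/-- The term `f(a_j)`. -/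
def fOfA (j : Fin m) : ITm (SigA F m ⊕ Unit) (fAr (arA ar m) 1) :=
  .app (Sum.inr ()) fun _ => aConst ar m j

/-- The substitution `σ_f : x_j ↦ f(a_j)`, applied to a term of `T(Σ, {x₁,…,x_m})`. -/
def sigmaF : Tm (F ⊕ Fin m) (varAr ar m) → ITm (SigA F m ⊕ Unit) (fAr (arA ar m) 1)
  | .app (Sum.inl g) args => .app (Sum.inl (Sum.inl g)) fun i => sigmaF (args i)
  | .app (Sum.inr j) _ => fOfA ar m j

/-- A tautology `⊥ = ⊥`, used as the empty conjunction. -/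
def trueFm : IFm (SigA F m ⊕ Unit) (fAr (arA ar m) 1) :=
  .eq (botConst ar m) (botConst ar m)

/-- The formula `⋀_{k ≠ j} a_k ≠ a_j`. -/
def distinctFm : IFm (SigA F m ⊕ Unit) (fAr (arA ar m) 1) :=
  IFm.bigAnd (trueFm ar m)
    ((List.finRange m).flatMap fun k =>
      (List.finRange m).filterMap fun j =>
        if k ≠ j then some (.not (.eq (aConst ar m k) (aConst ar m j))) else none)

/-- A rigid equation `E ⊩ e*`: a finite list `E` of equations together with a target
equation `e*`, between terms of `T(Σ, {x₁,…,x_m})`. -/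
abbrev RigidEq (F : Type) (ar : F → ℕ) (m : ℕ) : Type :=
  List (Tm (F ⊕ Fin m) (varAr ar m) × Tm (F ⊕ Fin m) (varAr ar m)) ×
    (Tm (F ⊕ Fin m) (varAr ar m) × Tm (F ⊕ Fin m) (varAr ar m))

/-- The formula `ψᵢ := ((⋀_{e ∈ Eᵢ} e·σ_f) ∧ ⋀_{k ≠ j} a_k ≠ a_j) → e*ᵢ·σ_f`. -/
def psiOf (r : RigidEq F ar m) : IFm (SigA F m ⊕ Unit) (fAr (arA ar m) 1) :=
  .or (.not (.and
        (IFm.bigAnd (trueFm ar m) (r.1.map fun p => .eq (sigmaF ar m p.1) (sigmaF ar m p.2)))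
        (distinctFm ar m)))
     (.eq (sigmaF ar m r.2.1) (sigmaF ar m r.2.2))

/-- The formula `Φ_S := ⋀ᵢ ψᵢ`. -/
def PhiS (S : List (RigidEq F ar m)) : IFm (SigA F m ⊕ Unit) (fAr (arA ar m) 1) :=
  IFm.bigAnd (trueFm ar m) (S.map (psiOf ar m))

/-- The substitution `σ` (assigning ground `Σ`-terms to the variables) solves the rigid
equation `E ⊩ e*`, i.e. `Eσ ⊢ e*σ`. -/
def SolvesRigid (σ : Fin m → Tm F ar) (r : RigidEq F ar m) : Prop :=
  EqCons {e | ∃ p ∈ r.1, e = (Tm.instVars σ p.1, Tm.instVars σ p.2)}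
    (Tm.instVars σ r.2.1) (Tm.instVars σ r.2.2)

/-- Embedding of ground `Σ`-terms into the terms over `Σ ∪ {a₁,…,a_m,⊥}` with the
variable `x`. -/
def embedGround : Tm F ar → ITm (SigA F m ⊕ Fin 1) (varAr (arA ar m) 1)
  | .app g args => .app (Sum.inl (Sum.inl g)) fun i => embedGround (args i)

/-- The variable `x` (the bound variable of the unary `f`). -/
def xVar : ITm (SigA F m ⊕ Fin 1) (varAr (arA ar m) 1) := .app (Sum.inr 0) fun i => i.elim0

/-- The constant `a_j`, as a candidate-expression term. -/
def aVar (j : Fin m) : ITm (SigA F m ⊕ Fin 1) (varAr (arA ar m) 1) :=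
  .app (Sum.inl (Sum.inr (Sum.inl j))) fun i => i.elim0

/-- The constant `⊥`, as a candidate-expression term. -/
def botVar : ITm (SigA F m ⊕ Fin 1) (varAr (arA ar m) 1) :=
  .app (Sum.inl (Sum.inr (Sum.inr ()))) fun i => i.elim0

/-- The candidate expression
`w_u(x) := ITE(x = a₁, u₁, ITE(x = a₂, u₂, …, ITE(x = a_m, u_m, ⊥)…))`. -/
def wOf (u : Fin m → Tm F ar) : ITm (SigA F m ⊕ Fin 1) (varAr (arA ar m) 1) :=
  (List.finRange m).foldr
    (fun j acc => .ite (.eq (xVar ar m) (aVar ar m j)) (embedGround ar m (u j)) acc)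
    (botVar ar m)

end Statement0


/-! ### Auxiliary development for the proof -/

section ProofAux

variable {F : Type} {ar : F → ℕ} {m : ℕ}

/-- Value of the constant `a_j` in a structure over the extended signature. -/
def vA (N : Str (SigA F m) (arA ar m)) (j : Fin m) : N.D :=
  N.interp (Sum.inr (Sum.inl j)) fun i => i.elim0

/-- Evaluation of a ground `Σ`-term in a structure over the extended signature. -/
def evalG (N : Str (SigA F m) (arA ar m)) : Tm F ar → N.D
  | .app g args => N.interp (Sum.inl g) fun i => evalG N (args i)

lemma interp0 (N : Str (SigA F m) (arA ar m)) (c : Fin m ⊕ Unit) (g : Fin 0 → N.D) :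
    N.interp (Sum.inr c) g = N.interp (Sum.inr c) (fun i => i.elim0) := by
  congr 1; funext i; exact i.elim0

lemma eval_soSubst_aConst (N : Str (SigA F m) (arA ar m))
    (w : ITm (SigA F m ⊕ Fin 1) (varAr (arA ar m) 1)) (j : Fin m) :
    ITm.eval N (ITm.soSubst w (aConst ar m j)) = vA N j := by
  simp only [aConst, ITm.soSubst, ITm.eval]
  exact interp0 N _ _

lemma eval_instVars_embed (N : Str (SigA F m) (arA ar m))
    (σ : Fin 1 → ITm (SigA F m) (arA ar m)) (t : Tm F ar) :
    ITm.eval N (ITm.instVars σ (embedGround ar m t)) = evalG N t := by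
  induction t with
  | app g args ih =>
    simp only [embedGround, ITm.instVars, ITm.eval, evalG]
    congr 1; funext i; exact ih i

lemma eval_instVars_chain (N : Str (SigA F m) (arA ar m)) (u : Fin m → Tm F ar)
    (σ : Fin 1 → ITm (SigA F m) (arA ar m)) (j : Fin m) (l : List (Fin m))
    (hj : j ∈ l) (hdist : ∀ k : Fin m, vA N k = vA N j → k = j)
    (hσ : ITm.eval N (σ 0) = vA N j) :
    ITm.eval N (ITm.instVars σ
      (l.foldr (fun k acc =>
          .ite (.eq (xVar ar m) (aVar ar m k)) (embedGround ar m (u k)) acc)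
        (botVar ar m))) = evalG N (u j) := by
  induction l with
  | nil => exact (List.not_mem_nil hj).elim
  | cons k tl ih =>
    simp only [List.foldr_cons, ITm.instVars, IFm.instVars, ITm.eval]
    split_ifs with hcnd
    · simp only [IFm.holds, ITm.eval, xVar, aVar, ITm.instVars] at hcnd
      replace hcnd := hcnd.trans (interp0 N _ _)
      have hk : k = j := hdist k (hσ ▸ hcnd).symm
      subst hk
      exact eval_instVars_embed N σ (u k)
    · have hkj : k ≠ j := by
        intro h; subst h
        apply hcnd
        show ITm.eval N (σ 0) = _
        simp only [ITm.eval, aVar, ITm.instVars]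
        exact hσ.trans (interp0 N _ _).symm
      have hj' : j ∈ tl := by
        rcases List.mem_cons.mp hj with h | h
        · exact absurd h.symm hkj
        · exact h
      exact ih hj'

/-- Main term lemma: in a structure with pairwise distinct `a`-values,
`(t·σ_f){w_u/f}` evaluates like `t{u/x}`. -/
lemma eval_soSubst_sigmaF (N : Str (SigA F m) (arA ar m)) (u : Fin m → Tm F ar)
    (hdist : ∀ j k : Fin m, vA N j = vA N k → j = k)
    (t : Tm (F ⊕ Fin m) (varAr ar m)) :
    ITm.eval N (ITm.soSubst (wOf ar m u) (sigmaF ar m t)) = evalG N (Tm.instVars u t) := by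
  induction t with
  | app f args ih =>
    cases f with
    | inl g =>
      simp only [sigmaF, ITm.soSubst, ITm.eval, Tm.instVars, evalG]
      congr 1; funext i; exact ih i
    | inr j =>
      simp only [sigmaF, fOfA, ITm.soSubst, Tm.instVars]
      exact eval_instVars_chain N u _ j (List.finRange m) (List.mem_finRange j)
        (fun k h => hdist k j h) (eval_soSubst_aConst N (wOf ar m u) j)

lemma soSubst_bigAnd {k : ℕ} (w : ITm (SigA F m ⊕ Fin k) (varAr (arA ar m) k))
    (top : IFm (SigA F m ⊕ Unit) (fAr (arA ar m) k))
    (l : List (IFm (SigA F m ⊕ Unit) (fAr (arA ar m) k))) :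
    IFm.soSubst w (IFm.bigAnd top l) = IFm.bigAnd (IFm.soSubst w top) (l.map (IFm.soSubst w)) := by
  induction l with
  | nil => rfl
  | cons φ tl ih => simp only [IFm.bigAnd, List.foldr_cons, List.map_cons, IFm.soSubst]
                    exact congrArg _ ih

lemma holds_bigAnd (N : Str (SigA F m) (arA ar m))
    (top : IFm (SigA F m) (arA ar m)) (l : List (IFm (SigA F m) (arA ar m))) :
    IFm.holds N (IFm.bigAnd top l) ↔ IFm.holds N top ∧ ∀ φ ∈ l, IFm.holds N φ := by
  induction l with
  | nil => simp [IFm.bigAnd]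
  | cons φ tl ih =>
    simp only [IFm.bigAnd, List.foldr_cons] at ih ⊢
    simp only [IFm.holds, ih, List.mem_cons]
    constructor
    · rintro ⟨h1, h2, h3⟩
      exact ⟨h2, fun ψ hψ => hψ.elim (fun h => h ▸ h1) (h3 ψ)⟩
    · rintro ⟨h1, h2⟩
      exact ⟨h2 φ (Or.inl rfl), h1, fun ψ hψ => h2 ψ (Or.inr hψ)⟩

lemma holds_soSubst_trueFm (N : Str (SigA F m) (arA ar m))
    (w : ITm (SigA F m ⊕ Fin 1) (varAr (arA ar m) 1)) :
    IFm.holds N (IFm.soSubst w (trueFm ar m)) := by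
  simp [trueFm, IFm.soSubst, IFm.holds]

lemma holds_soSubst_distinct_iff (N : Str (SigA F m) (arA ar m))
    (w : ITm (SigA F m ⊕ Fin 1) (varAr (arA ar m) 1)) :
    IFm.holds N (IFm.soSubst w (distinctFm ar m)) ↔
      ∀ j k : Fin m, j ≠ k → vA N j ≠ vA N k := by
  rw [distinctFm, soSubst_bigAnd, holds_bigAnd]
  constructor
  · rintro ⟨-, h⟩ j k hjk
    have hmem : (IFm.soSubst w (.not (.eq (aConst ar m j) (aConst ar m k)))) ∈
        (((List.finRange m).flatMap fun k =>
          (List.finRange m).filterMap fun j' =>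
            if k ≠ j' then some (.not (.eq (aConst ar m k) (aConst ar m j'))) else none).map
          (IFm.soSubst w)) := by
      apply List.mem_map_of_mem
      apply List.mem_flatMap.mpr
      refine ⟨j, List.mem_finRange j, List.mem_filterMap.mpr
        ⟨k, List.mem_finRange k, ?_⟩⟩
      rw [if_pos hjk]
    have := h _ hmem
    simp only [IFm.soSubst, IFm.holds, eval_soSubst_aConst] at this
    exact this
  · intro h
    refine ⟨holds_soSubst_trueFm N w, ?_⟩
    intro φ hφ
    obtain ⟨ψ, hψmem, rfl⟩ := List.mem_map.mp hφ
    obtain ⟨j, -, hj⟩ := List.mem_flatMap.mp hψmem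
    obtain ⟨k, -, hk⟩ := List.mem_filterMap.mp hj
    split at hk
    · next hjk =>
      cases hk
      simp only [IFm.soSubst, IFm.holds, eval_soSubst_aConst]
      exact h j k hjk
    · simp at hk

/-- Restriction of an extended structure to the base signature. -/
def restrict (N : Str (SigA F m) (arA ar m)) : Str F ar :=
  { D := N.D, nonemptyD := N.nonemptyD, interp := fun g => N.interp (Sum.inl g) }

lemma eval_restrict (N : Str (SigA F m) (arA ar m)) (t : Tm F ar) :
    Tm.eval (restrict N) t = evalG N t := by
  induction t with
  | app g args ih =>
    simp only [Tm.eval, evalG, restrict]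
    congr 1; funext i; exact ih i

/-- Extension of a base structure to the extended signature, with fresh distinct
elements interpreting the new constants. -/
noncomputable def extend (M : Str F ar) : Str (SigA F m) (arA ar m) where
  D := M.D ⊕ (Fin m ⊕ Unit)
  nonemptyD := ⟨Sum.inr (Sum.inr ())⟩
  interp := fun g => match g with
    | Sum.inl g => fun args =>
        Sum.inl (M.interp g fun i =>
          (args i).elim id (fun _ => Classical.arbitrary M.D))
    | Sum.inr c => fun _ => Sum.inr c

lemma vA_extend (M : Str F ar) (j : Fin m) :
    vA (extend (ar := ar) (m := m) M) j = Sum.inr (Sum.inl j) := rfl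

lemma evalG_extend (M : Str F ar) (t : Tm F ar) :
    evalG (extend (ar := ar) (m := m) M) t = Sum.inl (Tm.eval M t) := by
  induction t with
  | app g args ih =>
    show Sum.inl (M.interp g fun i =>
        Sum.elim id (fun _ => Classical.arbitrary M.D) (evalG (extend M) (args i)))
      = Sum.inl (M.interp g fun i => Tm.eval M (args i))
    refine congrArg Sum.inl (congrArg _ (funext fun i => ?_))
    rw [ih i]
    rfl

end ProofAux

/-- The SREU problem `S` has a solution if and only if there are ground
terms `u₁,…,u_m ∈ T(Σ)` such that `Φ_S{w_u/f}` holds in every nonempty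
`(Σ ∪ {a₁,…,a_m,⊥})`-structure. -/
theorem sreu_iff_sygus_euf {F : Type} [Fintype F] (ar : F → ℕ) (m : ℕ)
    (S : List (RigidEq F ar m)) :
    (∃ σ : Fin m → Tm F ar, ∀ r ∈ S, SolvesRigid ar m σ r) ↔
      (∃ u : Fin m → Tm F ar, IFm.valid (IFm.soSubst (wOf ar m u) (PhiS ar m S))) := by
  constructor
  · rintro ⟨σ, hσ⟩
    refine ⟨σ, fun N => ?_⟩
    rw [PhiS, soSubst_bigAnd, holds_bigAnd]
    refine ⟨holds_soSubst_trueFm N _, ?_⟩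
    intro φ hφ
    obtain ⟨ψ, hψm, rfl⟩ := List.mem_map.mp hφ
    obtain ⟨r, hr, rfl⟩ := List.mem_map.mp hψm
    simp only [psiOf, IFm.soSubst, IFm.holds]
    refine or_iff_not_imp_left.mpr fun h => ?_
    rw [not_not] at h
    obtain ⟨hP, hD⟩ := h
    have hdist : ∀ j k : Fin m, vA N j = vA N k → j = k := by
      intro j k hjk
      by_contra hne
      exact (holds_soSubst_distinct_iff N _).mp hD j k hne hjk
    rw [soSubst_bigAnd, holds_bigAnd] at hP
    have key := hσ r hr (restrict N) ?_
    · rw [eval_soSubst_sigmaF N σ hdist, eval_soSubst_sigmaF N σ hdist]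
      rw [eval_restrict, eval_restrict] at key
      exact key
    · rintro e ⟨p, hp, rfl⟩
      rw [eval_restrict, eval_restrict]
      have hmem : IFm.soSubst (wOf ar m σ) (.eq (sigmaF ar m p.1) (sigmaF ar m p.2)) ∈
          (r.1.map fun p => IFm.eq (sigmaF ar m p.1) (sigmaF ar m p.2)).map
            (IFm.soSubst (wOf ar m σ)) :=
        List.mem_map_of_mem (List.mem_map_of_mem hp)
      have := hP.2 _ hmem
      simp only [IFm.soSubst, IFm.holds] at this
      rw [eval_soSubst_sigmaF N σ hdist, eval_soSubst_sigmaF N σ hdist] at this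
      exact this
  · rintro ⟨u, hval⟩
    refine ⟨u, fun r hr => ?_⟩
    intro M hM
    have hdist : ∀ j k : Fin m, vA (extend (ar := ar) (m := m) M) j = vA (extend M) k → j = k := by
      intro j k hjk
      rw [vA_extend, vA_extend] at hjk
      exact Sum.inl.inj (Sum.inr.inj hjk)
    have hv := hval (extend M)
    rw [PhiS, soSubst_bigAnd, holds_bigAnd] at hv
    have hmem : IFm.soSubst (wOf ar m u) (psiOf ar m r) ∈
        (S.map (psiOf ar m)).map (IFm.soSubst (wOf ar m u)) :=
      List.mem_map_of_mem (List.mem_map_of_mem hr)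
    have hψ := hv.2 _ hmem
    simp only [psiOf, IFm.soSubst, IFm.holds] at hψ
    have hY : IFm.holds (extend M) (IFm.soSubst (wOf ar m u) (distinctFm ar m)) :=
      (holds_soSubst_distinct_iff _ _).mpr fun j k hjk hv => hjk (hdist j k hv)
    have hX : IFm.holds (extend M) (IFm.soSubst (wOf ar m u)
        (IFm.bigAnd (trueFm ar m)
          (r.1.map fun p => .eq (sigmaF ar m p.1) (sigmaF ar m p.2)))) := by
      rw [soSubst_bigAnd, holds_bigAnd]
      refine ⟨holds_soSubst_trueFm _ _, ?_⟩
      intro φ hφ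
      obtain ⟨ψ, hψm, rfl⟩ := List.mem_map.mp hφ
      obtain ⟨p, hp, rfl⟩ := List.mem_map.mp hψm
      simp only [IFm.soSubst, IFm.holds]
      rw [eval_soSubst_sigmaF _ u hdist, eval_soSubst_sigmaF _ u hdist,
        evalG_extend, evalG_extend]
      exact congrArg Sum.inl (hM _ ⟨p, hp, rfl⟩)
    rcases hψ with h | h
    · exact absurd ⟨hX, hY⟩ h
    · rw [eval_soSubst_sigmaF _ u hdist, eval_soSubst_sigmaF _ u hdist,
        evalG_extend, evalG_extend] at h
      exact Sum.inl.inj h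

end SyGuS
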